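/- Let H be a real Hilbert space, let χ₁, …, χ_n ∈ H, let D be the subspace they span, let Q be the orthogonal projection onto D, and let T : H → H be a linear map. Let M be the Gram matrix M i j = ⟨χ_i, χ_j⟩ and suppose m > 0 satisfies c ⬝ (M c) ≥ m·‖c‖² for all c ∈ ℝ^n. Set δ = max over k of ‖(id − Q)(T χ_k)‖. Then for every φ ∈ D, ‖(id − Q)(T φ)‖ ≤ δ·√(n/m)·‖φ‖. -/

import Mathlib

open RealInnerProductSpace

/-- Let `χ₁, …, χ_n ∈ H` span `D`, let `Q` be the orthogonal projection
onto `D`, `T : H → H` linear, `M` the Gram matrix with `c ⬝ M c ≥ m ‖c‖²` for `m > 0`,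
and `δ = max_k ‖(id - Q)(T χ_k)‖`. Then `‖(id - Q)(T φ)‖ ≤ δ √(n/m) ‖φ‖` for `φ ∈ D`. -/
theorem projection_error_on_span {H : Type*} [NormedAddCommGroup H]
    [InnerProductSpace ℝ H] [CompleteSpace H]
    {n : ℕ} (χ : Fin n → H)
    (D : Submodule ℝ H) (hD : D = Submodule.span ℝ (Set.range χ))
    [FiniteDimensional ℝ D]
    (T : H →ₗ[ℝ] H)
    (M : Matrix (Fin n) (Fin n) ℝ) (hM : ∀ i j, M i j = ⟪χ i, χ j⟫)
    (m : ℝ) (hm : 0 < m)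
    (hMbound : ∀ c : Fin n → ℝ, m * ∑ i, c i ^ 2 ≤ ∑ i, c i * ∑ j, M i j * c j)
    (δ : ℝ)
    (hδ : IsGreatest
      (Set.range fun k : Fin n =>
        ‖T (χ k) - (D.orthogonalProjectionOnto (T (χ k)) : H)‖) δ) :
    ∀ φ ∈ D,
      ‖T φ - (D.orthogonalProjectionOnto (T φ) : H)‖ ≤ δ * Real.sqrt (n / m) * ‖φ‖ := by
  intro φ hφ
  -- δ ≥ 0
  obtain ⟨⟨k0, hk0⟩, hub⟩ := hδ
  have hδ0 : 0 ≤ δ := hk0 ▸ norm_nonneg _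
  -- represent φ
  rw [hD] at hφ
  obtain ⟨c, hc⟩ := (Submodule.mem_span_range_iff_exists_fun ℝ).mp hφ
  -- the projection as a linear map H →ₗ H
  set Q : H →ₗ[ℝ] H := D.subtype.comp D.orthogonalProjectionOnto.toLinearMap with hQ
  have hQap : ∀ x : H, Q x = (D.orthogonalProjectionOnto x : H) := fun x => rfl
  set e : Fin n → H := fun i => T (χ i) - Q (T (χ i)) with he
  have key : T φ - Q (T φ) = ∑ i, c i • e i := by
    rw [← hc, map_sum, map_sum]
    simp only [map_smul, he]
    rw [← Finset.sum_sub_distrib]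
    congr 1; ext i; rw [smul_sub]
  -- ‖φ‖² = cᵀ M c
  have hnorm : ∑ i, c i * ∑ j, M i j * c j = ‖φ‖ ^ 2 := by
    rw [← real_inner_self_eq_norm_sq φ, ← hc]
    simp only [hM, sum_inner, real_inner_smul_left, inner_sum, real_inner_smul_right,
      Finset.mul_sum]
    refine Finset.sum_congr rfl fun i _ => Finset.sum_congr rfl fun j _ => by rw [real_inner_comm]; ring
  have hcbound : ∑ i, c i ^ 2 ≤ ‖φ‖ ^ 2 / m := by
    rw [le_div_iff₀ hm, mul_comm]
    exact hnorm ▸ hMbound c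
  -- norm estimate
  have h1 : ‖T φ - Q (T φ)‖ ≤ δ * ∑ i, |c i| := by
    rw [key]
    calc ‖∑ i, c i • e i‖ ≤ ∑ i, ‖c i • e i‖ := norm_sum_le _ _
      _ ≤ ∑ i, |c i| * δ := by
          apply Finset.sum_le_sum
          intro i _
          rw [norm_smul, Real.norm_eq_abs]
          exact mul_le_mul_of_nonneg_left (hub ⟨i, rfl⟩) (abs_nonneg _)
      _ = δ * ∑ i, |c i| := by rw [← Finset.sum_mul, mul_comm]
  have h2 : ∑ i, |c i| ≤ Real.sqrt n * Real.sqrt (∑ i, c i ^ 2) := by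
    have := sq_sum_le_card_mul_sum_sq (s := Finset.univ) (f := fun i => |c i|)
    simp only [sq_abs, Finset.card_univ, Fintype.card_fin] at this
    have h3 : ∑ i, |c i| = Real.sqrt ((∑ i, |c i|) ^ 2) := by
      rw [Real.sqrt_sq (Finset.sum_nonneg fun i _ => abs_nonneg _)]
    rw [h3, ← Real.sqrt_mul (Nat.cast_nonneg n)]
    exact Real.sqrt_le_sqrt (by exact_mod_cast this)
  have h4 : Real.sqrt (∑ i, c i ^ 2) ≤ ‖φ‖ / Real.sqrt m := by
    rw [← Real.sqrt_sq (norm_nonneg φ), ← Real.sqrt_div' _ hm.le]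
    exact Real.sqrt_le_sqrt hcbound
  calc ‖T φ - Q (T φ)‖ ≤ δ * ∑ i, |c i| := h1
    _ ≤ δ * (Real.sqrt n * (‖φ‖ / Real.sqrt m)) := by
        apply mul_le_mul_of_nonneg_left _ hδ0
        calc ∑ i, |c i| ≤ Real.sqrt n * Real.sqrt (∑ i, c i ^ 2) := h2
          _ ≤ Real.sqrt n * (‖φ‖ / Real.sqrt m) :=
            mul_le_mul_of_nonneg_left h4 (Real.sqrt_nonneg _)
    _ = δ * Real.sqrt (n / m) * ‖φ‖ := by
        rw [Real.sqrt_div' _ hm.le]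
        ring
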